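/- Consider the balanced mixture where class y ∈ {-1, +1} has distribution N(y A_y μ, A_y²), with A_y = T(d; a_y, 1, a_y) invertible symmetric tridiagonal Toeplitz matrices. The Bayes optimal decision boundary is the quadric {x : xᵀAx + bᵀx + c = 0} with A = A₋₁⁻² − A₁⁻², b = 2(A₋₁⁻¹ + A₁⁻¹)μ, and c = 2Σᵢ [ln(1 + 2a₋₁cos(iπ/(d+1))) − ln(1 + 2a₁cos(iπ/(d+1)))]. -/

import Mathlib

open Matrix Real Finset

/-- Density of the multivariate Gaussian `N(m, S)` on `ℝ^d` (for `S` positive definite). -/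
noncomputable def gaussPDF {d : ℕ} (m : Fin d → ℝ) (S : Matrix (Fin d) (Fin d) ℝ)
    (x : Fin d → ℝ) : ℝ :=
  ((2 * π) ^ (d : ℝ) * S.det) ^ (-(1 : ℝ) / 2) *
    Real.exp (-((x - m) ⬝ᵥ (S⁻¹ *ᵥ (x - m))) / 2)

/-- The `d × d` symmetric tridiagonal Toeplitz matrix `T(d; a, 1, a)`. -/
def triToeplitz (d : ℕ) (a : ℝ) : Matrix (Fin d) (Fin d) ℝ :=
  Matrix.of fun i j =>
    if (i : ℕ) = (j : ℕ) then (1 : ℝ)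
    else if (i : ℕ) + 1 = (j : ℕ) ∨ (j : ℕ) + 1 = (i : ℕ) then a else 0

/-! ### Auxiliary lemmas -/

lemma tri_apply {d : ℕ} (a : ℝ) (i j : Fin d) :
    triToeplitz d a i j =
      if (i : ℕ) = (j : ℕ) then (1 : ℝ)
      else if (i : ℕ) + 1 = (j : ℕ) ∨ (j : ℕ) + 1 = (i : ℕ) then a else 0 := rfl

lemma prod_root_unity (m : ℕ) (hm : 0 < m) (ζ : ℂ) (hζ : IsPrimitiveRoot ζ m) (z : ℂ) :
    ∏ j ∈ range m, (z - ζ ^ j) = z ^ m - 1 := by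
  have himg : (range m).image (ζ ^ ·) = Polynomial.nthRootsFinset m (1 : ℂ) := by
    apply Finset.eq_of_subset_of_card_le
    · intro w hw
      simp only [Finset.mem_image, Finset.mem_range] at hw
      obtain ⟨j, hj, rfl⟩ := hw
      rw [Polynomial.mem_nthRootsFinset hm]
      rw [← pow_mul, mul_comm, pow_mul, hζ.pow_eq_one, one_pow]
    · rw [hζ.card_nthRootsFinset, Finset.card_image_of_injOn]
      · simp
      · intro i hi j hj h
        exact hζ.injOn_pow (by simpa using hi) (by simpa using hj) h
  have hpoly := Polynomial.X_pow_sub_one_eq_prod hm hζ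
  have := congrArg (Polynomial.eval z) hpoly
  simp only [Polynomial.eval_sub, Polynomial.eval_pow, Polynomial.eval_X, Polynomial.eval_one,
    Polynomial.eval_prod, Polynomial.eval_C] at this
  rw [this, ← himg, Finset.prod_image]
  intro i hi j hj h
  exact hζ.injOn_pow (by simpa using hi) (by simpa using hj) h

lemma cos_prod (n : ℕ) (r : ℝ) (hr : r ^ 2 ≠ 1) :
    ∏ k ∈ range n, (r ^ 2 + 2 * r * Real.cos ((k + 1 : ℝ) * π / (n + 1)) + 1)
      = (r ^ (2 * n + 2) - 1) / (r ^ 2 - 1) := by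
  have hm : 0 < 2 * n + 2 := by omega
  have hn1 : ((n : ℂ) + 1) ≠ 0 := by
    intro h
    have := congrArg Complex.re h
    simp at this
    nlinarith [Nat.cast_nonneg (α := ℝ) n]
  set ζ : ℂ := Complex.exp (2 * ↑π * Complex.I / (↑(2 * n + 2) : ℂ)) with hζdef
  have hζ : IsPrimitiveRoot ζ (2 * n + 2) := Complex.isPrimitiveRoot_exp _ (by omega)
  have key := prod_root_unity (2 * n + 2) hm ζ hζ (-(r : ℂ))
  have hpow : ∀ j : ℕ, ζ ^ j = Complex.exp ((j : ℂ) * ↑π * Complex.I / ((n : ℂ) + 1)) := by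
    intro j
    rw [hζdef, ← Complex.exp_nat_mul]
    congr 1
    have h2 : ((2 * n + 2 : ℕ) : ℂ) = 2 * ((n : ℂ) + 1) := by push_cast; ring
    rw [h2]
    field_simp
  set f : ℕ → ℂ := fun j => -(r : ℂ) - ζ ^ j with hf
  have hsplit : ∏ j ∈ range (2 * n + 2), f j
      = (f 0 * f (n + 1)) * ∏ k ∈ range n, (f (k + 1) * f (2 * n + 1 - k)) := by
    have e1 : (2 * n + 2) = (n + 1) + (n + 1) := by omega
    rw [e1, Finset.prod_range_add, Finset.prod_range_succ' f n,
      Finset.prod_range_succ' (fun j => f ((n+1) + j)) n]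
    have e2 : ∏ k ∈ range n, f ((n + 1) + (k + 1)) = ∏ k ∈ range n, f (2 * n + 1 - k) := by
      rw [← Finset.prod_range_reflect (fun k => f ((n+1) + (k+1))) n]
      apply Finset.prod_congr rfl
      intro k hk
      simp only [Finset.mem_range] at hk
      congr 1
      omega
    rw [e2, Finset.prod_mul_distrib]
    ring
  have hpair : ∀ k ∈ range n, f (k + 1) * f (2 * n + 1 - k)
      = ((r ^ 2 + 2 * r * Real.cos ((k + 1 : ℝ) * π / (n + 1)) + 1 : ℝ) : ℂ) := by
    intro k hk
    simp only [Finset.mem_range] at hk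
    set θ : ℝ := ((k : ℝ) + 1) * π / ((n : ℝ) + 1) with hθdef
    have h1 : ζ ^ (k + 1) = Complex.exp ((θ : ℂ) * Complex.I) := by
      rw [hpow]
      congr 1
      rw [hθdef]
      push_cast
      field_simp
    have h2 : ζ ^ (2 * n + 1 - k) = Complex.exp (-(θ : ℂ) * Complex.I) := by
      rw [hpow]
      have hθ' : ((2 * n + 1 - k : ℕ) : ℂ) * ↑π * Complex.I / ((n : ℂ) + 1)
          = 2 * ↑π * Complex.I - (θ : ℂ) * Complex.I := by
        have hk' : ((2 * n + 1 - k : ℕ) : ℂ) = 2 * (n : ℂ) + 1 - k := by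
          push_cast [Nat.cast_sub (by omega : k ≤ 2 * n + 1)]; ring
        rw [hk', hθdef]
        push_cast
        field_simp
        ring
      rw [hθ', Complex.exp_sub, Complex.exp_two_pi_mul_I, one_div, ← Complex.exp_neg]
      congr 1
      ring
    have hmul : ζ ^ (k + 1) * ζ ^ (2 * n + 1 - k) = 1 := by
      rw [h1, h2, ← Complex.exp_add]
      have : (θ : ℂ) * Complex.I + -(θ:ℂ) * Complex.I = 0 := by ring
      rw [this, Complex.exp_zero]
    have hsum : ζ ^ (k + 1) + ζ ^ (2 * n + 1 - k) = 2 * Complex.cos (θ : ℂ) := by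
      rw [h1, h2, Complex.two_cos]
    have expand : f (k + 1) * f (2 * n + 1 - k)
        = (r : ℂ) ^ 2 + (r : ℂ) * (ζ ^ (k + 1) + ζ ^ (2 * n + 1 - k))
          + ζ ^ (k + 1) * ζ ^ (2 * n + 1 - k) := by
      simp only [hf]; ring
    rw [expand, hmul, hsum, ← Complex.ofReal_cos]
    push_cast
    ring
  have hf0 : f 0 = -(r:ℂ) - 1 := by
    simp only [hf, pow_zero]
  have hfn1 : f (n + 1) = -(r:ℂ) + 1 := by
    simp only [hf, hpow]
    have harg : ((n + 1 : ℕ) : ℂ) * ↑π * Complex.I / ((n : ℂ) + 1) = ↑π * Complex.I := by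
      push_cast
      field_simp
    rw [harg, Complex.exp_pi_mul_I]
    ring
  rw [hsplit, Finset.prod_congr rfl hpair, hf0, hfn1] at key
  have hneg : (-(r:ℂ)) ^ (2 * n + 2) = (r : ℂ) ^ (2 * n + 2) := by
    exact Even.neg_pow ⟨n + 1, by ring⟩ _
  rw [hneg] at key
  have hcoef : (-(r:ℂ) - 1) * (-(r:ℂ) + 1) = ((r ^ 2 - 1 : ℝ) : ℂ) := by push_cast; ring
  rw [hcoef, ← Complex.ofReal_prod] at key
  have key2 : (r ^ 2 - 1 : ℝ) * ∏ k ∈ range n, (r ^ 2 + 2 * r * Real.cos ((k + 1 : ℝ) * π / (n + 1)) + 1)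
      = (r ^ (2 * n + 2) - 1 : ℝ) := by
    rw [← Complex.ofReal_mul] at key
    exact_mod_cast key
  have h3 : r ^ 2 - 1 ≠ 0 := fun h => hr (by linarith)
  rw [eq_div_iff h3]
  linarith [key2]

lemma tri_det_rec (n : ℕ) (a : ℝ) :
    (triToeplitz (n + 2) a).det
      = (triToeplitz (n + 1) a).det - a ^ 2 * (triToeplitz n a).det := by
  set T := triToeplitz (n + 2) a with hT
  rw [show (triToeplitz (n+2) a).det = T.det from rfl, Matrix.det_succ_row_zero,
    Fin.sum_univ_succ, Fin.sum_univ_succ]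
  have hrest : ∀ j : Fin n, (-1 : ℝ) ^ ((j.succ.succ : Fin (n+2)) : ℕ) * T 0 j.succ.succ
      * (T.submatrix Fin.succ (j.succ.succ).succAbove).det = 0 := by
    intro j
    have : T 0 j.succ.succ = 0 := by
      rw [hT, tri_apply]
      have e1 : (j.succ.succ : ℕ) = (j : ℕ) + 2 := rfl
      have e0 : ((0 : Fin (n + 2)) : ℕ) = 0 := rfl
      rw [e1, e0, if_neg (by omega : ¬(0 = (j : ℕ) + 2)),
        if_neg (by omega : ¬(0 + 1 = (j : ℕ) + 2 ∨ (j : ℕ) + 2 + 1 = 0))]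
    rw [this]; ring
  rw [Finset.sum_eq_zero (fun j _ => hrest j), add_zero]
  have h00 : T 0 0 = 1 := by rw [hT, tri_apply]; simp
  have hsub0 : T.submatrix Fin.succ ((0 : Fin (n+2)).succAbove) = triToeplitz (n+1) a := by
    rw [Fin.succAbove_zero]
    ext i j
    rw [Matrix.submatrix_apply, hT, tri_apply, tri_apply]
    simp only [Fin.val_succ]
    split_ifs <;> first | rfl | omega
  have h01 : T 0 (0 : Fin (n+1)).succ = a := by
    rw [hT, tri_apply]
    have : (((0 : Fin (n+1)).succ : Fin (n+2)) : ℕ) = 1 := rfl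
    rw [this]
    norm_num
  have hM1 : (T.submatrix Fin.succ ((0 : Fin (n+1)).succ.succAbove)).det
      = a * (triToeplitz n a).det := by
    set M₁ := T.submatrix Fin.succ ((0 : Fin (n+1)).succ.succAbove) with hM
    rw [Matrix.det_succ_column_zero, Fin.sum_univ_succ]
    have hcol : ∀ i : Fin n, M₁ i.succ 0 = 0 := by
      intro i
      rw [hM, Matrix.submatrix_apply, hT, tri_apply]
      have h1 : ((i.succ.succ : Fin (n+2)) : ℕ) = (i : ℕ) + 2 := rfl
      have h2 : ((((0 : Fin (n+1)).succ).succAbove 0 : Fin (n+2)) : ℕ) = 0 := rfl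
      rw [h1, h2, if_neg (by omega : ¬((i : ℕ) + 2 = 0)),
        if_neg (by omega : ¬((i : ℕ) + 2 + 1 = 0 ∨ 0 + 1 = (i : ℕ) + 2))]
    have hzero : ∑ i : Fin n, (-1 : ℝ) ^ ((i.succ : Fin (n+1)) : ℕ) * M₁ i.succ 0
        * (M₁.submatrix i.succ.succAbove Fin.succ).det = 0 := by
      apply Finset.sum_eq_zero
      intro i _
      rw [hcol]; ring
    rw [hzero, add_zero]
    have hentry : M₁ 0 0 = a := by
      rw [hM, Matrix.submatrix_apply, hT, tri_apply]
      norm_num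
    have hsub2 : M₁.submatrix ((0 : Fin (n+1)).succAbove) Fin.succ = triToeplitz n a := by
      rw [Fin.succAbove_zero]
      ext i j
      rw [Matrix.submatrix_apply, hM, Matrix.submatrix_apply, hT, tri_apply, tri_apply]
      have h1 : ((i.succ.succ : Fin (n+2)) : ℕ) = (i : ℕ) + 2 := rfl
      have h2 : ((((0 : Fin (n+1)).succ).succAbove j.succ : Fin (n+2)) : ℕ) = (j : ℕ) + 2 := rfl
      rw [h1, h2]
      split_ifs <;> first | rfl | omega
    rw [hentry, hsub2]
    simp
  rw [h00, h01, hsub0, hM1]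
  simp
  try ring

lemma tri_det_zero (a : ℝ) : (triToeplitz 0 a).det = 1 := Matrix.det_fin_zero

lemma tri_det_one (a : ℝ) : (triToeplitz 1 a).det = 1 := by
  rw [Matrix.det_fin_one]
  rfl

lemma tri_factor_pos {a : ℝ} (ha : 0 ≤ a) (ha' : a < 1 / 2) (θ : ℝ) :
    0 < 1 + 2 * a * Real.cos θ := by
  nlinarith [Real.neg_one_le_cos θ, Real.cos_le_one θ]

lemma tri_det_eq_prod (n : ℕ) (a : ℝ) (ha : 0 ≤ a) (ha' : a < 1 / 2) :
    (triToeplitz n a).det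
      = ∏ k ∈ range n, (1 + 2 * a * Real.cos ((k + 1 : ℝ) * π / (n + 1))) := by
  rcases eq_or_lt_of_le ha with h0 | hpos
  · rw [← h0]
    have h1 : triToeplitz n 0 = (1 : Matrix (Fin n) (Fin n) ℝ) := by
      ext i j
      rw [Matrix.one_apply, tri_apply]
      by_cases h : (i : ℕ) = (j : ℕ)
      · rw [if_pos h, if_pos (Fin.ext h)]
      · rw [if_neg h, if_neg (fun hh => h (congrArg Fin.val hh))]
        split_ifs <;> rfl
    rw [h1, Matrix.det_one]
    symm
    apply Finset.prod_eq_one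
    intro k _
    ring
  · have ha0 : a ≠ 0 := ne_of_gt hpos
    have h4a : 0 < 1 - 4 * a ^ 2 := by nlinarith
    set s : ℝ := Real.sqrt (1 - 4 * a ^ 2) with hs
    have hs2 : s ^ 2 = 1 - 4 * a ^ 2 := Real.sq_sqrt (by linarith)
    have hsnn : 0 ≤ s := Real.sqrt_nonneg _
    have hslt : s < 1 := by nlinarith
    set r : ℝ := (1 - s) / (2 * a) with hrdef
    have hrpos : 0 < r := div_pos (by linarith) (by linarith)
    have hrne : r ≠ 0 := ne_of_gt hrpos
    have hkey : a * (r ^ 2 + 1) = r := by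
      rw [hrdef]
      field_simp
      nlinarith [hs2]
    have hr1 : r ^ 2 ≠ 1 := by
      intro h
      have hr1' : r = 1 := by nlinarith
      rw [hr1'] at hkey
      nlinarith
    have hr2ne : r ^ 2 - 1 ≠ 0 := fun h => hr1 (by linarith)
    have hpt : ∀ k ∈ range n, (1 + 2 * a * Real.cos ((k + 1 : ℝ) * π / (n + 1)))
        = (a / r) * (r ^ 2 + 2 * r * Real.cos ((k + 1 : ℝ) * π / (n + 1)) + 1) := by
      intro k _
      have expand : (a / r) * (r ^ 2 + 2 * r * Real.cos ((k + 1 : ℝ) * π / (n + 1)) + 1)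
          = (a * (r ^ 2 + 1)) / r + 2 * a * Real.cos ((k + 1 : ℝ) * π / (n + 1)) := by
        field_simp
        ring
      rw [expand, hkey, div_self hrne]
      try ring
    set E : ℕ → ℝ := fun m => (a / r) ^ m * ((r ^ (2 * m + 2) - 1) / (r ^ 2 - 1)) with hE
    have hE0 : E 0 = 1 := by
      simp only [hE, pow_zero, one_mul]
      have : 2 * 0 + 2 = 2 := by norm_num
      rw [this, div_self hr2ne]
    have hE1 : E 1 = 1 := by
      simp only [hE, pow_one]
      have h4 : (r ^ (2 * 1 + 2) - 1) / (r ^ 2 - 1) = r ^ 2 + 1 := by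
        rw [div_eq_iff hr2ne]; ring
      rw [h4, div_mul_eq_mul_div, hkey, div_self hrne]
    have hErec : ∀ m, E (m + 2) = E (m + 1) - a ^ 2 * E m := by
      intro m
      have h2 : a ^ 2 * (r ^ (2 * m + 6) - 1) - a * r * (r ^ (2 * m + 4) - 1)
          + a ^ 2 * r ^ 2 * (r ^ (2 * m + 2) - 1) = 0 := by
        linear_combination (a * (r ^ (2 * m + 4) - 1)) * hkey
      have expand : E (m + 2) - (E (m + 1) - a ^ 2 * E m)
          = (a / r) ^ m / (r ^ 2 - 1) / r ^ 2
            * (a ^ 2 * (r ^ (2 * m + 6) - 1) - a * r * (r ^ (2 * m + 4) - 1)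
              + a ^ 2 * r ^ 2 * (r ^ (2 * m + 2) - 1)) := by
        simp only [hE]
        rw [pow_succ, pow_succ]
        field_simp
        ring
      rw [h2, mul_zero] at expand
      linarith
    have hD : ∀ m, (triToeplitz m a).det = E m ∧ (triToeplitz (m + 1) a).det = E (m + 1) := by
      intro m
      induction m with
      | zero => exact ⟨by rw [tri_det_zero, hE0], by rw [tri_det_one, hE1]⟩
      | succ k ih => exact ⟨ih.2, by rw [tri_det_rec, ih.1, ih.2, hErec]⟩
    have hDn : (triToeplitz n a).det
        = (a / r) ^ n * ((r ^ (2 * n + 2) - 1) / (r ^ 2 - 1)) := (hD n).1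
    rw [hDn, ← cos_prod n r hr1]
    have hconst : (a / r) ^ n = ∏ _k ∈ range n, (a / r) := by
      rw [Finset.prod_const, Finset.card_range]
    rw [hconst, ← Finset.prod_mul_distrib]
    exact (Finset.prod_congr rfl hpt).symm

lemma tri_det_pos (n : ℕ) {a : ℝ} (ha : 0 ≤ a) (ha' : a < 1 / 2) :
    0 < (triToeplitz n a).det := by
  rw [tri_det_eq_prod n a ha ha']
  exact Finset.prod_pos fun k _ => tri_factor_pos ha ha' _

lemma tri_log_det (n : ℕ) {a : ℝ} (ha : 0 ≤ a) (ha' : a < 1 / 2) :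
    Real.log (triToeplitz n a).det
      = ∑ k ∈ range n, Real.log (1 + 2 * a * Real.cos ((k + 1 : ℝ) * π / (n + 1))) := by
  rw [tri_det_eq_prod n a ha ha']
  exact Real.log_prod fun k _ => ne_of_gt (tri_factor_pos ha ha' _)

lemma tri_transpose (n : ℕ) (a : ℝ) : (triToeplitz n a)ᵀ = triToeplitz n a := by
  ext i j
  rw [Matrix.transpose_apply, tri_apply, tri_apply]
  split_ifs <;> first | rfl | omega

lemma symm_dot {d : ℕ} {A : Matrix (Fin d) (Fin d) ℝ} (hA : Aᵀ = A) (u w : Fin d → ℝ) :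
    (A *ᵥ u) ⬝ᵥ w = u ⬝ᵥ (A *ᵥ w) := by
  rw [Matrix.dotProduct_mulVec, ← hA, Matrix.vecMul_transpose, hA]

lemma quad_expand {d : ℕ} (A : Matrix (Fin d) (Fin d) ℝ) (hA : Aᵀ = A) (hdet : A.det ≠ 0)
    (μ x : Fin d → ℝ) :
    (x - A *ᵥ μ) ⬝ᵥ ((A * A)⁻¹ *ᵥ (x - A *ᵥ μ))
      = x ⬝ᵥ ((A⁻¹ * A⁻¹) *ᵥ x) - 2 * (μ ⬝ᵥ (A⁻¹ *ᵥ x)) + μ ⬝ᵥ μ := by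
  have hu : IsUnit A.det := isUnit_iff_ne_zero.mpr hdet
  have hinvT : (A⁻¹)ᵀ = A⁻¹ := by rw [Matrix.transpose_nonsing_inv, hA]
  have hAinv : A * A⁻¹ = 1 := Matrix.mul_nonsing_inv A hu
  have hinvA : A⁻¹ * A = 1 := Matrix.nonsing_inv_mul A hu
  rw [Matrix.mul_inv_rev]
  have hPm : (A⁻¹ * A⁻¹) *ᵥ (A *ᵥ μ) = A⁻¹ *ᵥ μ := by
    rw [Matrix.mulVec_mulVec, Matrix.mul_assoc, hinvA, Matrix.mul_one]
  rw [Matrix.mulVec_sub, hPm]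
  rw [sub_dotProduct, dotProduct_sub, dotProduct_sub]
  have e1 : x ⬝ᵥ (A⁻¹ *ᵥ μ) = μ ⬝ᵥ (A⁻¹ *ᵥ x) := by
    rw [dotProduct_comm, symm_dot hinvT]
  have e2 : (A *ᵥ μ) ⬝ᵥ ((A⁻¹ * A⁻¹) *ᵥ x) = μ ⬝ᵥ (A⁻¹ *ᵥ x) := by
    rw [symm_dot hA, Matrix.mulVec_mulVec, ← Matrix.mul_assoc, hAinv, Matrix.one_mul]
  have e3 : (A *ᵥ μ) ⬝ᵥ (A⁻¹ *ᵥ μ) = μ ⬝ᵥ μ := by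
    rw [symm_dot hA, Matrix.mulVec_mulVec, hAinv, Matrix.one_mulVec]
  rw [e1, e2, e3]
  ring

lemma gaussPDF_pos {d : ℕ} (m : Fin d → ℝ) (S : Matrix (Fin d) (Fin d) ℝ)
    (hS : 0 < S.det) (x : Fin d → ℝ) : 0 < gaussPDF m S x := by
  unfold gaussPDF
  apply mul_pos _ (Real.exp_pos _)
  apply Real.rpow_pos_of_pos
  exact mul_pos (Real.rpow_pos_of_pos (by positivity) _) hS

lemma gaussPDF_log {d : ℕ} (m : Fin d → ℝ) (S : Matrix (Fin d) (Fin d) ℝ)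
    (hS : 0 < S.det) (x : Fin d → ℝ) :
    Real.log (gaussPDF m S x)
      = (-(1 : ℝ) / 2) * (Real.log ((2 * π) ^ (d : ℝ)) + Real.log S.det)
        + (-((x - m) ⬝ᵥ (S⁻¹ *ᵥ (x - m))) / 2) := by
  unfold gaussPDF
  have hbase : 0 < (2 * π) ^ (d : ℝ) * S.det :=
    mul_pos (Real.rpow_pos_of_pos (by positivity) _) hS
  rw [Real.log_mul (by positivity) (Real.exp_ne_zero _), Real.log_exp,
    Real.log_rpow hbase, Real.log_mul (ne_of_gt (Real.rpow_pos_of_pos (by positivity) _))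
      (ne_of_gt hS)]

/-- For the balanced mixture where class `y ∈ {-1,+1}` has distribution `N(y A_y μ, A_y²)`
with `A_y = T(d; a_y, 1, a_y)`, the Bayes optimal decision boundary is the quadric
`xᵀAx + bᵀx + c = 0` with `A = A₋₁⁻² − A₁⁻²`, `b = 2(A₋₁⁻¹ + A₁⁻¹)μ`, and
`c = 2Σᵢ [ln(1 + 2a₋₁cos(iπ/(d+1))) − ln(1 + 2a₁cos(iπ/(d+1)))]`: the class `+1`
conditional density exceeds (resp. equals) the class `-1` conditional density exactly where
the quadratic form is positive (resp. zero). -/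
theorem bayes_boundary_quadric (d : ℕ) (μ : Fin d → ℝ) (a₁ aₘ : ℝ)
    (ha₁ : 0 ≤ a₁) (ha₁' : a₁ < 1 / 2) (haₘ : 0 ≤ aₘ) (haₘ' : aₘ < 1 / 2) :
    let A₁ := triToeplitz d a₁
    let Aₘ := triToeplitz d aₘ
    let A := Aₘ⁻¹ * Aₘ⁻¹ - A₁⁻¹ * A₁⁻¹
    let b := (2 : ℝ) • ((Aₘ⁻¹ + A₁⁻¹) *ᵥ μ)
    let c := 2 * ∑ i : Fin d,
      (Real.log (1 + 2 * aₘ * Real.cos (((i : ℕ) + 1 : ℝ) * π / ((d : ℝ) + 1)))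
        - Real.log (1 + 2 * a₁ * Real.cos (((i : ℕ) + 1 : ℝ) * π / ((d : ℝ) + 1))))
    ∀ x : Fin d → ℝ,
      (gaussPDF (A₁ *ᵥ μ) (A₁ * A₁) x > gaussPDF (-(Aₘ *ᵥ μ)) (Aₘ * Aₘ) x
          ↔ x ⬝ᵥ (A *ᵥ x) + b ⬝ᵥ x + c > 0) ∧
        (gaussPDF (A₁ *ᵥ μ) (A₁ * A₁) x = gaussPDF (-(Aₘ *ᵥ μ)) (Aₘ * Aₘ) x
          ↔ x ⬝ᵥ (A *ᵥ x) + b ⬝ᵥ x + c = 0) := by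
  intro A₁ Aₘ A b c x
  have hA1 : A₁ = triToeplitz d a₁ := rfl
  have hAm : Aₘ = triToeplitz d aₘ := rfl
  have hd1 : 0 < A₁.det := by rw [hA1]; exact tri_det_pos d ha₁ ha₁'
  have hdm : 0 < Aₘ.det := by rw [hAm]; exact tri_det_pos d haₘ haₘ'
  have hS1 : 0 < (A₁ * A₁).det := by rw [Matrix.det_mul]; positivity
  have hSm : 0 < (Aₘ * Aₘ).det := by rw [Matrix.det_mul]; positivity
  have hp1 := gaussPDF_pos (A₁ *ᵥ μ) (A₁ * A₁) hS1 x
  have hpm := gaussPDF_pos (-(Aₘ *ᵥ μ)) (Aₘ * Aₘ) hSm x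
  -- quadratic parts
  have hQ1 : (x - A₁ *ᵥ μ) ⬝ᵥ ((A₁ * A₁)⁻¹ *ᵥ (x - A₁ *ᵥ μ))
      = x ⬝ᵥ ((A₁⁻¹ * A₁⁻¹) *ᵥ x) - 2 * (μ ⬝ᵥ (A₁⁻¹ *ᵥ x)) + μ ⬝ᵥ μ :=
    quad_expand A₁ (by rw [hA1]; exact tri_transpose d a₁) (ne_of_gt hd1) μ x
  have hQm : (x - -(Aₘ *ᵥ μ)) ⬝ᵥ ((Aₘ * Aₘ)⁻¹ *ᵥ (x - -(Aₘ *ᵥ μ)))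
      = x ⬝ᵥ ((Aₘ⁻¹ * Aₘ⁻¹) *ᵥ x) + 2 * (μ ⬝ᵥ (Aₘ⁻¹ *ᵥ x)) + μ ⬝ᵥ μ := by
    have h := quad_expand Aₘ (by rw [hAm]; exact tri_transpose d aₘ) (ne_of_gt hdm) (-μ) x
    rw [Matrix.mulVec_neg] at h
    rw [h, neg_dotProduct, dotProduct_neg, neg_dotProduct, neg_neg]
    ring
  -- the log difference
  have hlog : Real.log (gaussPDF (A₁ *ᵥ μ) (A₁ * A₁) x)
      - Real.log (gaussPDF (-(Aₘ *ᵥ μ)) (Aₘ * Aₘ) x)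
      = (x ⬝ᵥ (A *ᵥ x) + b ⬝ᵥ x + c) / 2 := by
    rw [gaussPDF_log _ _ hS1 x, gaussPDF_log _ _ hSm x, hQ1, hQm]
    have hld1 : Real.log (A₁ * A₁).det = 2 * Real.log A₁.det := by
      rw [Matrix.det_mul, Real.log_mul (ne_of_gt hd1) (ne_of_gt hd1)]; ring
    have hldm : Real.log (Aₘ * Aₘ).det = 2 * Real.log Aₘ.det := by
      rw [Matrix.det_mul, Real.log_mul (ne_of_gt hdm) (ne_of_gt hdm)]; ring
    rw [hld1, hldm]
    have hlog1 : Real.log A₁.det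
        = ∑ k ∈ range d, Real.log (1 + 2 * a₁ * Real.cos ((k + 1 : ℝ) * π / (d + 1))) := by
      rw [hA1]; exact tri_log_det d ha₁ ha₁'
    have hlogm : Real.log Aₘ.det
        = ∑ k ∈ range d, Real.log (1 + 2 * aₘ * Real.cos ((k + 1 : ℝ) * π / (d + 1))) := by
      rw [hAm]; exact tri_log_det d haₘ haₘ'
    have hc : c = 2 * (Real.log Aₘ.det - Real.log A₁.det) := by
      show (2 : ℝ) * _ = _
      rw [hlog1, hlogm, ← Finset.sum_sub_distrib]
      rw [Fin.sum_univ_eq_sum_range (fun i =>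
        Real.log (1 + 2 * aₘ * Real.cos (((i : ℕ) + 1 : ℝ) * π / ((d : ℝ) + 1)))
          - Real.log (1 + 2 * a₁ * Real.cos (((i : ℕ) + 1 : ℝ) * π / ((d : ℝ) + 1)))) d]
    have hxA : x ⬝ᵥ (A *ᵥ x)
        = x ⬝ᵥ ((Aₘ⁻¹ * Aₘ⁻¹) *ᵥ x) - x ⬝ᵥ ((A₁⁻¹ * A₁⁻¹) *ᵥ x) := by
      show x ⬝ᵥ ((Aₘ⁻¹ * Aₘ⁻¹ - A₁⁻¹ * A₁⁻¹) *ᵥ x) = _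
      rw [Matrix.sub_mulVec, dotProduct_sub]
    have hbx : b ⬝ᵥ x = 2 * (μ ⬝ᵥ (Aₘ⁻¹ *ᵥ x)) + 2 * (μ ⬝ᵥ (A₁⁻¹ *ᵥ x)) := by
      show ((2 : ℝ) • ((Aₘ⁻¹ + A₁⁻¹) *ᵥ μ)) ⬝ᵥ x = _
      rw [smul_dotProduct]
      have hsymm : (Aₘ⁻¹ + A₁⁻¹)ᵀ = Aₘ⁻¹ + A₁⁻¹ := by
        rw [Matrix.transpose_add, Matrix.transpose_nonsing_inv, Matrix.transpose_nonsing_inv,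
          hA1, hAm, tri_transpose, tri_transpose]
      rw [symm_dot hsymm μ x, Matrix.add_mulVec, dotProduct_add, smul_eq_mul]
      ring
    rw [hc, hxA, hbx]
    ring
  constructor
  · constructor
    · intro h
      have := (Real.log_lt_log_iff hpm hp1).mpr h
      linarith [hlog]
    · intro h
      have h2 : Real.log (gaussPDF (-(Aₘ *ᵥ μ)) (Aₘ * Aₘ) x)
          < Real.log (gaussPDF (A₁ *ᵥ μ) (A₁ * A₁) x) := by linarith [hlog]
      exact (Real.log_lt_log_iff hpm hp1).mp h2
  · constructor
    · intro h
      rw [h] at hlog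
      linarith [hlog]
    · intro h
      have h2 : Real.log (gaussPDF (A₁ *ᵥ μ) (A₁ * A₁) x)
          = Real.log (gaussPDF (-(Aₘ *ᵥ μ)) (Aₘ * Aₘ) x) := by linarith [hlog]
      have := Real.exp_log hp1
      rw [← this, h2, Real.exp_log hpm]
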